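/- Let J ∈ ℕ, J ≥ 1, T > 0, and γ ≥ 0. Let M : [0, T] → ℝ^{J×J} be continuously differentiable with M(t) symmetric positive definite for every t ∈ [0, T] and with its derivative satisfying |xᵀ M′(t) x| ≤ 2γ · xᵀ M(t) x for all x ∈ ℝ^J and t ∈ [0, T]. Let S : [0, T] → ℝ^{J×J} be continuous with S(t) symmetric positive semidefinite for every t. If U : [0, T] → ℝ^J is continuously differentiable and satisfies (d/dt)(M(t)U(t)) + S(t)U(t) = 0 on [0, T], then for every t ∈ [0, T]: U(t)ᵀ M(t) U(t) + 2 ∫₀ᵗ U(s)ᵀ S(s) U(s) ds ≤ e^{2γt} · U(0)ᵀ M(0) U(0). -/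

import Mathlib

open scoped Matrix

private lemma hasDerivAt_dot {J : ℕ} {f g : ℝ → Fin J → ℝ} {f' g' : Fin J → ℝ} {t : ℝ}
    (hf : HasDerivAt f f' t) (hg : HasDerivAt g g' t) :
    HasDerivAt (fun s => f s ⬝ᵥ g s) (f' ⬝ᵥ g t + f t ⬝ᵥ g') t := by
  simp only [dotProduct]
  have h : ∀ i ∈ Finset.univ, HasDerivAt (fun s => f s i * g s i)
      (f' i * g t i + f t i * g' i) t := fun i _ =>
    ((hasDerivAt_pi.1 hf) i).mul ((hasDerivAt_pi.1 hg) i)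
  simpa [Finset.sum_add_distrib] using HasDerivAt.fun_sum h

private lemma hasDerivAt_mulVec {J : ℕ} {A : ℝ → Matrix (Fin J) (Fin J) ℝ}
    {A' : Matrix (Fin J) (Fin J) ℝ} {u : ℝ → Fin J → ℝ} {v : Fin J → ℝ} {t : ℝ}
    (hA : ∀ i j, HasDerivAt (fun s => A s i j) (A' i j) t)
    (hu : HasDerivAt u v t) :
    HasDerivAt (fun s => (A s).mulVec (u s)) (A'.mulVec (u t) + (A t).mulVec v) t := by
  rw [hasDerivAt_pi]
  intro i
  simp only [Matrix.mulVec, dotProduct, Pi.add_apply]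
  have h : ∀ j ∈ Finset.univ, HasDerivAt (fun s => A s i j * u s j)
      (A' i j * u t j + A t i j * v j) t := fun j _ =>
    (hA i j).mul ((hasDerivAt_pi.1 hu) j)
  simpa [Finset.sum_add_distrib] using HasDerivAt.fun_sum h

private lemma dot_symm {J : ℕ} {A : Matrix (Fin J) (Fin J) ℝ} (hA : A.IsHermitian)
    (v w : Fin J → ℝ) : v ⬝ᵥ A.mulVec w = w ⬝ᵥ A.mulVec v := by
  have hAT : Aᵀ = A := by
    ext i j; simpa using (hA.apply j i).symm
  rw [Matrix.dotProduct_mulVec, ← Matrix.mulVec_transpose, hAT, dotProduct_comm]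

theorem linear_system_energy_estimate
    (J : ℕ) (hJ : 1 ≤ J) (T : ℝ) (hT : 0 < T) (γ : ℝ) (hγ : 0 ≤ γ)
    (M M' S : ℝ → Matrix (Fin J) (Fin J) ℝ)
    (hMderiv : ∀ t ∈ Set.Icc (0 : ℝ) T, ∀ i j,
      HasDerivWithinAt (fun s => M s i j) (M' t i j) (Set.Icc 0 T) t)
    (hM'cont : ∀ i j, ContinuousOn (fun t => M' t i j) (Set.Icc 0 T))
    (hMpd : ∀ t ∈ Set.Icc (0 : ℝ) T, (M t).PosDef)
    (hM'bound : ∀ t ∈ Set.Icc (0 : ℝ) T, ∀ x : Fin J → ℝ,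
      abs (x ⬝ᵥ (M' t).mulVec x) ≤ 2 * γ * (x ⬝ᵥ (M t).mulVec x))
    (hScont : ∀ i j, ContinuousOn (fun t => S t i j) (Set.Icc 0 T))
    (hSpsd : ∀ t ∈ Set.Icc (0 : ℝ) T, (S t).PosSemidef)
    (U : ℝ → Fin J → ℝ)
    (hU : ContDiffOn ℝ 1 U (Set.Icc 0 T))
    (hODE : ∀ t ∈ Set.Icc (0 : ℝ) T,
      HasDerivWithinAt (fun s => (M s).mulVec (U s))
        (-(S t).mulVec (U t)) (Set.Icc 0 T) t) :
    ∀ t ∈ Set.Icc (0 : ℝ) T,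
      U t ⬝ᵥ (M t).mulVec (U t) + 2 * ∫ s in (0 : ℝ)..t, U s ⬝ᵥ (S s).mulVec (U s)
        ≤ Real.exp (2 * γ * t) * (U 0 ⬝ᵥ (M 0).mulVec (U 0)) := by
  set Ic := Set.Icc (0 : ℝ) T with hIc
  -- basic continuity facts
  have hUcont : ContinuousOn U Ic := hU.continuousOn
  have hUicont : ∀ i : Fin J, ContinuousOn (fun t => U t i) Ic := fun i =>
    (continuous_apply i).comp_continuousOn hUcont
  set E : ℝ → ℝ := fun t => U t ⬝ᵥ (M t).mulVec (U t) with hE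
  set Q : ℝ → ℝ := fun t => U t ⬝ᵥ (S t).mulVec (U t) with hQ
  have hMicont : ∀ i j, ContinuousOn (fun t => M t i j) Ic := fun i j t ht =>
    (hMderiv t ht i j).continuousWithinAt
  have dotcont : ∀ (A : ℝ → Matrix (Fin J) (Fin J) ℝ),
      (∀ i j, ContinuousOn (fun t => A t i j) Ic) →
      ContinuousOn (fun t => U t ⬝ᵥ (A t).mulVec (U t)) Ic := by
    intro A hA
    simp only [dotProduct, Matrix.mulVec]
    exact continuousOn_finset_sum _ fun i _ => (hUicont i).mul
      (continuousOn_finset_sum _ fun j _ => (hA i j).mul (hUicont j))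
  have hEcont : ContinuousOn E Ic := dotcont M hMicont
  have hQcont : ContinuousOn Q Ic := dotcont S hScont
  -- nonnegativity
  have hEnn : ∀ t ∈ Ic, 0 ≤ E t := by
    intro t ht
    have := (Matrix.posSemidef_iff_dotProduct_mulVec.mp (hMpd t ht).posSemidef).2 (U t)
    simpa using this
  have hQnn : ∀ t ∈ Ic, 0 ≤ Q t := by
    intro t ht
    have := (Matrix.posSemidef_iff_dotProduct_mulVec.mp (hSpsd t ht)).2 (U t)
    simpa using this
  -- the integral term
  have hQint : MeasureTheory.IntegrableOn Q (Set.uIcc 0 T) := by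
    rw [Set.uIcc_of_le hT.le]
    exact hQcont.integrableOn_compact isCompact_Icc
  set I : ℝ → ℝ := fun x => ∫ s in (0:ℝ)..x, Q s with hI
  have hIcont : ContinuousOn I Ic := by
    have := intervalIntegral.continuousOn_primitive_interval hQint
    rwa [Set.uIcc_of_le hT.le] at this
  have hInn : ∀ t ∈ Ic, 0 ≤ I t := by
    intro t ht
    exact intervalIntegral.integral_nonneg ht.1 fun u hu =>
      hQnn u ⟨hu.1, hu.2.trans ht.2⟩
  set F : ℝ → ℝ := fun t => E t + 2 * I t with hF
  set g : ℝ → ℝ := fun t => Real.exp (-(2 * γ) * t) * F t with hg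
  have hgcont : ContinuousOn g Ic :=
    ((Real.continuous_exp.comp (continuous_const.mul continuous_id)).continuousOn).mul
      (hEcont.add (continuousOn_const.mul hIcont))
  -- derivative computation on the interior
  have hgderiv : ∀ t ∈ Set.Ioo (0:ℝ) T, HasDerivAt g
      (Real.exp (-(2 * γ) * t) * ((-(U t ⬝ᵥ (M' t).mulVec (U t))) + (-(2 * γ)) * F t)) t := by
    intro t ht
    have htI : t ∈ Ic := Set.mem_Icc_of_Ioo ht
    have hnhds : Ic ∈ nhds t := Icc_mem_nhds ht.1 ht.2
    -- U is differentiable at t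
    have hUdiff : DifferentiableAt ℝ U t :=
      ((hU.differentiableOn one_ne_zero) t htI).differentiableAt hnhds
    have hUt : HasDerivAt U (deriv U t) t := hUdiff.hasDerivAt
    set V := deriv U t with hV
    -- entries of M differentiable at t
    have hMt : ∀ i j, HasDerivAt (fun s => M s i j) (M' t i j) t := fun i j =>
      (hMderiv t htI i j).hasDerivAt hnhds
    have hW : HasDerivAt (fun s => (M s).mulVec (U s))
        ((M' t).mulVec (U t) + (M t).mulVec V) t := hasDerivAt_mulVec hMt hUt
    have hODEt : HasDerivAt (fun s => (M s).mulVec (U s)) (-(S t).mulVec (U t)) t :=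
      (hODE t htI).hasDerivAt hnhds
    have huniq : (M' t).mulVec (U t) + (M t).mulVec V = -(S t).mulVec (U t) :=
      hW.unique hODEt
    have hMV : (M t).mulVec V = -(S t).mulVec (U t) - (M' t).mulVec (U t) := by
      rw [← huniq]; abel
    -- derivative of E
    have hEd : HasDerivAt E (V ⬝ᵥ (M t).mulVec (U t) + U t ⬝ᵥ (-(S t).mulVec (U t))) t :=
      hasDerivAt_dot hUt hODEt
    have hsym : V ⬝ᵥ (M t).mulVec (U t) = U t ⬝ᵥ (M t).mulVec V := by
      rw [dot_symm (hMpd t htI).1]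
    have hEd' : HasDerivAt E (-(2 * Q t) - U t ⬝ᵥ (M' t).mulVec (U t)) t := by
      convert hEd using 1
      rw [hsym, hMV]
      simp only [hQ, dotProduct_sub, dotProduct_neg]
      ring
    -- derivative of I
    have hQt : ContinuousAt Q t := by
      have := hQcont t htI
      exact this.continuousAt hnhds
    have hImeas : StronglyMeasurableAtFilter Q (nhds t) MeasureTheory.volume := by
      refine ⟨Set.Ioo 0 T, Ioo_mem_nhds ht.1 ht.2, ?_⟩
      exact (hQcont.mono Set.Ioo_subset_Icc_self).aestronglyMeasurable measurableSet_Ioo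
    have hIint : IntervalIntegrable Q MeasureTheory.volume 0 t := by
      apply ContinuousOn.intervalIntegrable
      rw [Set.uIcc_of_le ht.1.le]
      exact hQcont.mono (Set.Icc_subset_Icc le_rfl ht.2.le)
    have hId : HasDerivAt I (Q t) t :=
      intervalIntegral.integral_hasDerivAt_right hIint hImeas hQt
    -- derivative of F
    have hFd : HasDerivAt F (-(U t ⬝ᵥ (M' t).mulVec (U t))) t := by
      have := hEd'.fun_add ((hId.const_mul (2:ℝ)))
      exact this.congr_deriv (by ring)
    -- derivative of g
    have hexp : HasDerivAt (fun s => Real.exp (-(2 * γ) * s))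
        (Real.exp (-(2 * γ) * t) * (-(2 * γ) * 1)) t :=
      ((hasDerivAt_id t).const_mul (-(2 * γ))).exp
    have := hexp.fun_mul hFd
    exact this.congr_deriv (by ring)
  have hgnonpos : ∀ t ∈ Set.Ioo (0:ℝ) T,
      Real.exp (-(2 * γ) * t) * ((-(U t ⬝ᵥ (M' t).mulVec (U t))) + (-(2 * γ)) * F t) ≤ 0 := by
    intro t ht
    have htI : t ∈ Ic := Set.mem_Icc_of_Ioo ht
    have h1 : -(U t ⬝ᵥ (M' t).mulVec (U t)) ≤ 2 * γ * E t := by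
      have := hM'bound t htI (U t)
      have h2 := neg_abs_le (U t ⬝ᵥ (M' t).mulVec (U t))
      have := neg_le_neg this
      linarith [neg_abs_le (U t ⬝ᵥ (M' t).mulVec (U t))]
    have h2 : E t ≤ F t := by
      have := hInn t htI
      simp only [hF]
      linarith
    have h3 : 2 * γ * E t ≤ 2 * γ * F t :=
      mul_le_mul_of_nonneg_left h2 (by linarith)
    have : (-(U t ⬝ᵥ (M' t).mulVec (U t))) + (-(2 * γ)) * F t ≤ 0 := by linarith
    exact mul_nonpos_of_nonneg_of_nonpos (Real.exp_pos _).le this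
  -- g is antitone on [0,T]
  have hganti : AntitoneOn g Ic := by
    have hint : interior Ic = Set.Ioo 0 T := interior_Icc
    apply antitoneOn_of_deriv_nonpos (convex_Icc 0 T) hgcont
    · rw [hint]
      exact fun t ht => (hgderiv t ht).differentiableAt.differentiableWithinAt
    · rw [hint]
      intro t ht
      rw [(hgderiv t ht).deriv]
      exact hgnonpos t ht
  intro t ht
  have h0 : (0:ℝ) ∈ Ic := Set.left_mem_Icc.2 hT.le
  have hgt : g t ≤ g 0 := hganti h0 ht ht.1
  have hg0 : g 0 = E 0 := by
    simp [hg, hF, hI, intervalIntegral.integral_same]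
  have key : Real.exp (-(2 * γ) * t) * F t ≤ E 0 := by rw [← hg0]; exact hgt
  have hFt : F t = U t ⬝ᵥ (M t).mulVec (U t) + 2 * ∫ s in (0:ℝ)..t, U s ⬝ᵥ (S s).mulVec (U s) :=
    rfl
  rw [← hFt]
  have hpos : (0:ℝ) < Real.exp (2 * γ * t) := Real.exp_pos _
  have : Real.exp (2 * γ * t) * (Real.exp (-(2 * γ) * t) * F t) ≤ Real.exp (2 * γ * t) * E 0 :=
    mul_le_mul_of_nonneg_left key hpos.le
  calc F t = Real.exp (2 * γ * t) * (Real.exp (-(2 * γ) * t) * F t) := by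
        have h0' : 2 * γ * t + -(2 * γ) * t = 0 := by ring
        rw [← mul_assoc, ← Real.exp_add, h0', Real.exp_zero, one_mul]
      _ ≤ Real.exp (2 * γ * t) * E 0 := this
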